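/- arXiv:1710.07716 — 2 statements merged into one kernel-verified Lean document; each statement's English description precedes it below -/
import Mathlib

section
/- Let L ≥ 3 be a finite integer and let φ₁, ..., φ_L be nonnegative reals summing to 2π. Define D = Σ_{i=1}^{L-1} Σ_{j=i+1}^{L} sin²(Σ_{k=i}^{j-1} φ_k). Then D ≤ L²/4. -/
open Finset

lemma aux_cross (f : ℕ → ℝ) (n : ℕ) :
    (∑ k ∈ Finset.Ico 1 (n+1), f k)^2 =
      ∑ k ∈ Finset.Ico 1 (n+1), (f k)^2 +
      2 * ∑ i ∈ Finset.Ico 1 (n+1), ∑ j ∈ Finset.Ico (i+1) (n+1), f i * f j := by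
  induction n with
  | zero => simp
  | succ n ih =>
    rw [Finset.sum_Ico_succ_top (by omega : 1 ≤ n+1),
        Finset.sum_Ico_succ_top (by omega : 1 ≤ n+1),
        Finset.sum_Ico_succ_top (by omega : 1 ≤ n+1)]
    have h1 : ∑ i ∈ Finset.Ico 1 (n+1), ∑ j ∈ Finset.Ico (i+1) (n+1+1), f i * f j
        = (∑ i ∈ Finset.Ico 1 (n+1), ∑ j ∈ Finset.Ico (i+1) (n+1), f i * f j)
          + (∑ i ∈ Finset.Ico 1 (n+1), f i) * f (n+1) := by
      rw [Finset.sum_mul, ← Finset.sum_add_distrib]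
      refine Finset.sum_congr rfl fun i hi => ?_
      rw [Finset.sum_Ico_succ_top (by simp at hi; omega : i+1 ≤ n+1)]
    have h0 : ∑ j ∈ Finset.Ico (n+1+1) (n+1+1), f (n+1) * f j = 0 := by simp
    rw [h1, h0]
    nlinarith [ih]

lemma gauss_icc (n : ℕ) : ∑ i ∈ Finset.Icc 1 n, (i : ℝ) = n * (n + 1) / 2 := by
  induction n with
  | zero => simp
  | succ n ih =>
    rw [Finset.sum_Icc_succ_top (by omega : 1 ≤ n+1), ih]
    push_cast
    ring

/-- **Lemma 3.** For `L ≥ 3` and nonnegative internodal angles summing to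
`2π`, `D = Σ_{i=1}^{L-1} Σ_{j=i+1}^{L} sin²(Σ_{k=i}^{j-1} φ_k) ≤ L²/4`. -/
theorem stmt2 (L : ℕ) (hL : 3 ≤ L) (φ : ℕ → ℝ)
    (hφ : ∀ k ∈ Finset.Icc 1 L, 0 ≤ φ k)
    (hsum : ∑ k ∈ Finset.Icc 1 L, φ k = 2 * Real.pi) :
    ∑ i ∈ Finset.Icc 1 (L - 1), ∑ j ∈ Finset.Icc (i + 1) L,
        (Real.sin (∑ k ∈ Finset.Icc i (j - 1), φ k)) ^ 2 ≤ (L : ℝ) ^ 2 / 4 := by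
  -- partial sums and the unit vectors at doubled angles
  set θ : ℕ → ℝ := fun m => ∑ k ∈ Finset.Ico 1 m, φ k with hθdef
  set c : ℕ → ℝ := fun m => Real.cos (2 * θ m) with hcdef
  set s : ℕ → ℝ := fun m => Real.sin (2 * θ m) with hsdef
  -- segment sums
  have hseg : ∀ i j : ℕ, 1 ≤ i → i ≤ j →
      ∑ k ∈ Finset.Icc i (j - 1), φ k = θ j - θ i := by
    intro i j h1 h2
    have hj : 1 ≤ j := le_trans h1 h2
    have hIcc : Finset.Icc i (j - 1) = Finset.Ico i j := by
      rw [← Finset.Ico_add_one_right_eq_Icc]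
      congr 1
      omega
    rw [hIcc]
    have := Finset.sum_Ico_consecutive φ h1 h2
    simp only [hθdef]
    linarith [this]
  -- each term
  have hterm : ∀ i ∈ Finset.Icc 1 (L - 1), ∀ j ∈ Finset.Icc (i + 1) L,
      (Real.sin (∑ k ∈ Finset.Icc i (j - 1), φ k)) ^ 2
        = 1/2 - (c i * c j + s i * s j) / 2 := by
    intro i hi j hj
    simp only [Finset.mem_Icc] at hi hj
    rw [hseg i j hi.1 (by omega)]
    rw [Real.sin_sq_eq_half_sub]
    have : 2 * (θ j - θ i) = 2 * θ j - 2 * θ i := by ring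
    rw [this, Real.cos_sub]
    simp only [hcdef, hsdef]
    ring
  rw [Finset.sum_congr rfl (fun i hi => Finset.sum_congr rfl (hterm i hi))]
  -- split the sum
  have hsplit : ∑ i ∈ Finset.Icc 1 (L - 1), ∑ j ∈ Finset.Icc (i + 1) L,
      (1/2 - (c i * c j + s i * s j) / 2)
      = (∑ i ∈ Finset.Icc 1 (L - 1), ((Finset.Icc (i+1) L).card : ℝ)) / 2
        - ((∑ i ∈ Finset.Icc 1 (L - 1), ∑ j ∈ Finset.Icc (i+1) L, c i * c j)
          + (∑ i ∈ Finset.Icc 1 (L - 1), ∑ j ∈ Finset.Icc (i+1) L, s i * s j)) / 2 := by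
    have e1 : ∀ i ∈ Finset.Icc 1 (L - 1),
        ∑ j ∈ Finset.Icc (i+1) L, (1/2 - (c i * c j + s i * s j) / 2)
        = ((Finset.Icc (i+1) L).card : ℝ)/2
          - ((∑ j ∈ Finset.Icc (i+1) L, c i * c j)
             + (∑ j ∈ Finset.Icc (i+1) L, s i * s j))/2 := by
      intro i _
      rw [Finset.sum_sub_distrib, Finset.sum_const, nsmul_eq_mul]
      simp only [add_div]
      rw [Finset.sum_add_distrib, ← Finset.sum_div, ← Finset.sum_div]
      ring
    rw [Finset.sum_congr rfl e1, Finset.sum_sub_distrib, ← Finset.sum_div, ← Finset.sum_div,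
      Finset.sum_add_distrib]
  rw [hsplit]
  -- count
  have hcard : ∀ i ∈ Finset.Icc 1 (L-1), ((Finset.Icc (i+1) L).card : ℝ) = (L : ℝ) - i := by
    intro i hi
    simp only [Finset.mem_Icc] at hi
    rw [Nat.card_Icc]
    have : L + 1 - (i + 1) = L - i := by omega
    rw [this, Nat.cast_sub (by omega)]
  have hN : ∑ i ∈ Finset.Icc 1 (L - 1), ((Finset.Icc (i+1) L).card : ℝ)
      = (L : ℝ) * (L - 1) / 2 := by
    rw [Finset.sum_congr rfl hcard, Finset.sum_sub_distrib, Finset.sum_const, gauss_icc]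
    rw [Nat.card_Icc]
    have h1 : L - 1 + 1 - 1 = L - 1 := by omega
    rw [h1]
    have h2 : ((L - 1 : ℕ) : ℝ) = (L : ℝ) - 1 := by
      rw [Nat.cast_sub (by omega)]; simp
    rw [h2]
    ring_nf
    nlinarith [h2]
  rw [hN]
  -- the cross sums: extend outer range to Icc 1 L then apply aux_cross
  have hext : ∀ f : ℕ → ℝ,
      ∑ i ∈ Finset.Icc 1 (L-1), ∑ j ∈ Finset.Icc (i+1) L, f i * f j
      = ∑ i ∈ Finset.Ico 1 (L+1), ∑ j ∈ Finset.Ico (i+1) (L+1), f i * f j := by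
    intro f
    have h1 : Finset.Ico 1 (L+1) = Finset.Icc 1 L := Finset.Ico_add_one_right_eq_Icc 1 L
    have h2 : ∀ i, Finset.Ico (i+1) (L+1) = Finset.Icc (i+1) L := fun i => Finset.Ico_add_one_right_eq_Icc _ _
    simp only [h1, h2]
    have h3 : Finset.Icc 1 L = insert L (Finset.Icc 1 (L-1)) := by
      ext x
      simp only [Finset.mem_Icc, Finset.mem_insert]
      omega
    rw [h3, Finset.sum_insert (by simp only [Finset.mem_Icc, not_and, not_le]; omega)]
    have : ∑ j ∈ Finset.Icc (L+1) L, f L * f j = 0 := by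
      rw [Finset.Icc_eq_empty (by omega)]; simp
    rw [this, zero_add]
  have hCc := aux_cross c L
  have hCs := aux_cross s L
  rw [hext c, hext s]
  -- sum of squares equals L
  have hsq : ∑ k ∈ Finset.Ico 1 (L+1), ((c k)^2 + (s k)^2) = (L : ℝ) := by
    have : ∀ k, (c k)^2 + (s k)^2 = 1 := by
      intro k
      simp only [hcdef, hsdef]
      exact Real.cos_sq_add_sin_sq _
    simp only [this, Finset.sum_const, Nat.card_Ico, nsmul_eq_mul, mul_one]
    norm_cast
  rw [Finset.sum_add_distrib] at hsq
  nlinarith [sq_nonneg (∑ k ∈ Finset.Ico 1 (L+1), c k),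
    sq_nonneg (∑ k ∈ Finset.Ico 1 (L+1), s k),
    (by exact_mod_cast hL : (3:ℝ) ≤ (L:ℝ))]
end

section
/- Let L ≥ 3 and let θ₁, ..., θ_L be equally spaced angles, θ_i = 2πi/L. Then D = Σ_{1 ≤ i < j ≤ L} sin²(θ_j − θ_i) = L²/4. -/
open Finset


lemma csum12 (L : ℕ) (hL : 3 ≤ L) :
    ∑ j ∈ Finset.Icc 1 L, Complex.exp (4 * Real.pi * Complex.I * j / L) = 0 := by
  have hL0 : (L : ℂ) ≠ 0 := Nat.cast_ne_zero.mpr (by omega)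
  have hπ : (Real.pi : ℂ) ≠ 0 := Complex.ofReal_ne_zero.mpr Real.pi_ne_zero
  set ω : ℂ := Complex.exp (4 * Real.pi * Complex.I / L) with hω
  have hpow : ∀ j : ℕ, Complex.exp (4 * Real.pi * Complex.I * j / L) = ω ^ j := by
    intro j
    rw [hω, ← Complex.exp_nat_mul]
    ring_nf
  have hωL : ω ^ L = 1 := by
    rw [hω, ← Complex.exp_nat_mul]
    have h : (L : ℂ) * (4 * Real.pi * Complex.I / L) = (2 : ℤ) * (2 * Real.pi * Complex.I) := by
      field_simp; ring
    rw [h, Complex.exp_int_mul_two_pi_mul_I]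
  have hω1 : ω ≠ 1 := by
    rw [hω]
    intro h1
    rw [Complex.exp_eq_one_iff] at h1
    obtain ⟨n, hn⟩ := h1
    field_simp at hn
    have h2 : ((2:ℤ) : ℂ) = ((n * L : ℤ) : ℂ) := by
      push_cast
      have h := mul_left_cancel₀ (mul_ne_zero (mul_ne_zero (two_ne_zero) hπ) Complex.I_ne_zero)
        (show (2 * (Real.pi:ℂ) * Complex.I) * 2 = (2 * (Real.pi:ℂ) * Complex.I) * ((n:ℂ) * L) by
          linear_combination ((Real.pi:ℂ) * Complex.I) * hn)
      linear_combination h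
    have h2' : (2:ℤ) = n * L := by exact_mod_cast h2
    have hdvd : (L:ℤ) ∣ 2 := ⟨n, by linarith [h2']⟩
    have := Int.le_of_dvd (by norm_num) hdvd
    omega
  calc ∑ j ∈ Finset.Icc 1 L, Complex.exp (4 * Real.pi * Complex.I * j / L)
      = ∑ j ∈ Finset.Ico 1 (L+1), ω ^ j := by
        rw [Finset.Ico_add_one_right_eq_Icc]; exact Finset.sum_congr rfl fun j _ => hpow j
    _ = (ω ^ (L+1) - ω ^ 1) / (ω - 1) := geom_sum_Ico hω1 (by omega)
    _ = 0 := by rw [pow_succ, hωL]; simp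

lemma trigsum12 (L : ℕ) (hL : 3 ≤ L) :
    (∑ j ∈ Finset.Icc 1 L, Real.cos (4 * Real.pi * j / L) = 0) ∧
    (∑ j ∈ Finset.Icc 1 L, Real.sin (4 * Real.pi * j / L) = 0) := by
  have h := csum12 L hL
  have hrw : ∀ j : ℕ, Complex.exp (4 * Real.pi * Complex.I * j / L)
      = Complex.exp ((4 * Real.pi * j / L : ℝ) * Complex.I) := by
    intro j; congr 1; push_cast; ring
  rw [Finset.sum_congr rfl fun j _ => hrw j] at h
  constructor
  · have := congrArg Complex.re h
    simpa only [Complex.re_sum, Complex.exp_ofReal_mul_I_re, Complex.zero_re] using this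
  · have := congrArg Complex.im h
    simpa only [Complex.im_sum, Complex.exp_ofReal_mul_I_im, Complex.zero_im] using this

lemma row12 (L : ℕ) (hL : 3 ≤ L) (c : ℝ) :
    ∑ j ∈ Finset.Icc 1 L, Real.sin (2 * Real.pi * j / L - c) ^ 2 = L / 2 := by
  obtain ⟨hc, hs⟩ := trigsum12 L hL
  have h1 : ∀ j : ℕ, Real.sin (2 * Real.pi * j / L - c) ^ 2
      = 1 / 2 - (Real.cos (4 * Real.pi * j / L) * Real.cos (2*c)
               + Real.sin (4 * Real.pi * j / L) * Real.sin (2*c)) / 2 := by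
    intro j
    rw [Real.sin_sq, Real.cos_sq, ← Real.cos_sub]
    ring_nf
  rw [Finset.sum_congr rfl fun j _ => h1 j]
  rw [Finset.sum_sub_distrib]
  have hz : ∑ x ∈ Finset.Icc 1 L,
      (Real.cos (4 * Real.pi * x / L) * Real.cos (2*c)
        + Real.sin (4 * Real.pi * x / L) * Real.sin (2*c)) / 2 = 0 := by
    rw [← Finset.sum_div, Finset.sum_add_distrib, ← Finset.sum_mul, ← Finset.sum_mul, hc, hs]
    ring
  rw [hz]
  simp only [Finset.sum_const, Nat.card_Icc, nsmul_eq_mul]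
  have h2 : (L + 1 - 1 : ℕ) = L := by omega
  rw [h2]
  ring

/-- For `L ≥ 3` equally spaced angles `θ_i = 2πi/L`,
`D = Σ_{1≤i<j≤L} sin²(θ_j − θ_i) = L²/4`. -/
theorem stmt12 (L : ℕ) (hL : 3 ≤ L) :
    ∑ i ∈ Finset.Icc 1 L, ∑ j ∈ Finset.Icc (i + 1) L,
        Real.sin (2 * Real.pi * j / L - 2 * Real.pi * i / L) ^ 2
      = (L : ℝ) ^ 2 / 4 := by
  set f : ℕ → ℕ → ℝ := fun i j => Real.sin (2 * Real.pi * j / L - 2 * Real.pi * i / L) ^ 2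
    with hf
  have hsym : ∀ i j, f i j = f j i := by
    intro i j
    simp only [hf]
    rw [← neg_sub, Real.sin_neg, neg_sq]
  have hdiag : ∀ i, f i i = 0 := by
    intro i; simp [hf]
  have hpt : ∀ i j : ℕ, f i j
      = (if i < j then f i j else 0) + (if j < i then f i j else 0) := by
    intro i j
    rcases lt_trichotomy i j with h | h | h
    · simp [h, not_lt_of_gt h]
    · subst h; simp [hdiag]
    · simp [h, not_lt_of_gt h]
  -- full square sum
  have hS : ∑ i ∈ Finset.Icc 1 L, ∑ j ∈ Finset.Icc 1 L, f i j = (L : ℝ) ^ 2 / 2 := by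
    have : ∀ i ∈ Finset.Icc 1 L, ∑ j ∈ Finset.Icc 1 L, f i j = (L : ℝ) / 2 := by
      intro i _
      exact row12 L hL (2 * Real.pi * i / L)
    rw [Finset.sum_congr rfl this, Finset.sum_const, Nat.card_Icc, nsmul_eq_mul]
    have h2 : (L + 1 - 1 : ℕ) = L := by omega
    rw [h2]; ring
  -- split into two triangles
  have hT : ∑ i ∈ Finset.Icc 1 L, ∑ j ∈ Finset.Icc 1 L, (if j < i then f i j else 0)
      = ∑ i ∈ Finset.Icc 1 L, ∑ j ∈ Finset.Icc 1 L, (if i < j then f i j else 0) := by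
    rw [Finset.sum_comm]
    refine Finset.sum_congr rfl fun i _ => Finset.sum_congr rfl fun j _ => ?_
    rw [hsym]
  have hD : ∑ i ∈ Finset.Icc 1 L, ∑ j ∈ Finset.Icc (i + 1) L, f i j
      = ∑ i ∈ Finset.Icc 1 L, ∑ j ∈ Finset.Icc 1 L, (if i < j then f i j else 0) := by
    refine Finset.sum_congr rfl fun i _ => ?_
    rw [← Finset.sum_filter]
    congr 1
    ext j
    simp only [Finset.mem_filter, Finset.mem_Icc]
    omega
  have hsplit : ∑ i ∈ Finset.Icc 1 L, ∑ j ∈ Finset.Icc 1 L, f i j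
      = 2 * ∑ i ∈ Finset.Icc 1 L, ∑ j ∈ Finset.Icc 1 L, (if i < j then f i j else 0) := by
    calc ∑ i ∈ Finset.Icc 1 L, ∑ j ∈ Finset.Icc 1 L, f i j
        = ∑ i ∈ Finset.Icc 1 L, ∑ j ∈ Finset.Icc 1 L,
            ((if i < j then f i j else 0) + (if j < i then f i j else 0)) := by
          refine Finset.sum_congr rfl fun i _ => Finset.sum_congr rfl fun j _ => hpt i j
      _ = ∑ i ∈ Finset.Icc 1 L, ∑ j ∈ Finset.Icc 1 L, (if i < j then f i j else 0)
          + ∑ i ∈ Finset.Icc 1 L, ∑ j ∈ Finset.Icc 1 L, (if j < i then f i j else 0) := by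
          simp [Finset.sum_add_distrib]
      _ = 2 * ∑ i ∈ Finset.Icc 1 L, ∑ j ∈ Finset.Icc 1 L, (if i < j then f i j else 0) := by
          rw [hT]; ring
  rw [hD]
  have := hS.symm.trans hsplit
  linarith
end
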